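/- Let g be a 2n×2n matrix over K all of whose entries lie in O_K, whose entries strictly below the diagonal lie in t·O_K, and with det g ∈ O_K^×, and suppose gᵀJg = c·J for some c ∈ K^×. Then c^n = det g. (Equivalently: every element of the stabilizer in GO_{2n}(K) of the standard complete lattice chain lies in the identity component GO_{2n}°(K).) -/

import Mathlib

open Matrix

namespace OrthLM

/-- The matrix of the split symmetric bilinear form `h` on `K^{2n}`: ones on the
antidiagonal (`J i j = 1` iff `j = i* = 2n+1-i`), zeros elsewhere. -/
noncomputable def Jmat (k : Type*) [Field k] (n : ℕ) :
    Matrix (Fin (2*n)) (Fin (2*n)) (LaurentSeries k) :=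
  fun i j => if j = i.rev then 1 else 0

/-- The same antidiagonal matrix over an arbitrary commutative ring. -/
def Jgen (R : Type*) [CommRing R] (n : ℕ) : Matrix (Fin (2*n)) (Fin (2*n)) R :=
  fun i j => if j = i.rev then 1 else 0

lemma Jmat_eq_Jgen (k : Type*) [Field k] (n : ℕ) : Jmat k n = Jgen (LaurentSeries k) n := rfl

lemma rev_ne {n : ℕ} (i : Fin (2*n)) : i.rev ≠ i := by
  intro h
  have := congrArg Fin.val h
  simp [Fin.rev] at this
  omega

lemma Jgen_mul_self (R : Type*) [CommRing R] (n : ℕ) : Jgen R n * Jgen R n = 1 := by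
  ext i j
  simp only [Jgen, Matrix.mul_apply]
  rw [Finset.sum_eq_single i.rev]
  · simp [Matrix.one_apply, eq_comm]
  · intro b _ hb
    rw [if_neg (fun h => hb (by rw [h])), zero_mul]
  · simp

lemma Jgen_det_sq (R : Type*) [CommRing R] (n : ℕ) : (Jgen R n).det * (Jgen R n).det = 1 := by
  rw [← Matrix.det_mul, Jgen_mul_self, Matrix.det_one]

lemma map_Jgen {R S : Type*} [CommRing R] [CommRing S] (f : R →+* S) (n : ℕ) :
    (Jgen R n).map f = Jgen S n := by
  ext i j
  simp [Jgen, Matrix.map_apply, apply_ite f]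

/-- the diagonal pairing from the similitude relation, for upper triangular matrices -/
lemma diag_pair {F : Type*} [CommRing F] {n : ℕ} (M : Matrix (Fin (2*n)) (Fin (2*n)) F)
    (htri : ∀ i j : Fin (2*n), j < i → M i j = 0) (c : F)
    (h : Mᵀ * Jgen F n * M = c • Jgen F n) (i : Fin (2*n)) :
    M i i * M i.rev i.rev = c := by
  have key := congrFun (congrFun h i) i.rev
  have inner : ∀ b : Fin (2*n), (∑ a, M a i * (if b = a.rev then (1:F) else 0)) = M b.rev i := by
    intro b
    rw [Finset.sum_eq_single b.rev]
    · simp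
    · intro a _ ha
      rw [if_neg (fun hba => ha (by rw [hba, Fin.rev_rev])), mul_zero]
    · simp
  simp only [Matrix.mul_apply, Matrix.transpose_apply, Jgen, Matrix.smul_apply, if_pos rfl,
    eq_self_iff_true, if_true] at key
  simp only [inner] at key
  rw [Finset.sum_eq_single i.rev] at key
  · rw [Fin.rev_rev] at key
    rw [key, smul_eq_mul, mul_one]
  · intro b _ hb
    rcases lt_or_gt_of_ne hb with hlt | hgt
    · rw [htri b.rev i (by rw [← Fin.rev_rev i]; exact Fin.rev_lt_rev.mpr hlt), zero_mul]
    · rw [htri b i.rev hgt, mul_zero]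
  · simp

lemma prod_pair {F : Type*} [CommRing F] {n : ℕ} (d : Fin (2*n) → F) (c : F)
    (h : ∀ i, d i * d i.rev = c) : ∏ i, d i = c ^ n := by
  have hnn : n + n = 2*n := (two_mul n).symm
  have h1 : ∏ i, d i = ∏ i : Fin (n+n), d (finCongr hnn i) :=
    (Fintype.prod_equiv (finCongr hnn) _ _ (fun i => rfl)).symm
  rw [h1, Fin.prod_univ_add]
  have h2 : ∀ j : Fin n, finCongr hnn (Fin.natAdd n j.rev) = (finCongr hnn (Fin.castAdd n j)).rev := by
    intro j
    have hj := j.isLt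
    apply Fin.ext
    simp [Fin.rev]
    omega
  have h3 : (∏ i : Fin n, d (finCongr hnn (Fin.natAdd n i)))
      = ∏ i : Fin n, d ((finCongr hnn (Fin.castAdd n i)).rev) := by
    rw [← Equiv.prod_comp Fin.revPerm fun i : Fin n => d (finCongr hnn (Fin.natAdd n i))]
    refine Finset.prod_congr rfl fun j _ => ?_
    rw [Fin.revPerm_apply, h2]
  rw [h3, ← Finset.prod_mul_distrib]
  simp only [h]
  rw [Finset.prod_const, Finset.card_univ, Fintype.card_fin]

private lemma exists_lift {k : Type*} [Field k] (x : LaurentSeries k)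
    (hx : x = 0 ∨ 0 ≤ x.order) :
    ∃ P : PowerSeries k, HahnSeries.ofPowerSeries ℤ k P = x := by
  rcases hx with h | h
  · exact ⟨0, by simp [h]⟩
  refine ⟨PowerSeries.mk fun m => x.coeff (m : ℤ), ?_⟩
  ext i
  rw [PowerSeries.coeff_coe]
  split_ifs with hi
  · exact (HahnSeries.coeff_eq_zero_of_lt_order (lt_of_lt_of_le hi h)).symm
  · rw [PowerSeries.coeff_mk]
    congr 1
    omega

theorem stabilizer_in_identity_component (k : Type*) [Field k] (hk2 : (2 : k) ≠ 0)
    (n : ℕ) (hn : 2 ≤ n)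
    (g : Matrix (Fin (2*n)) (Fin (2*n)) (LaurentSeries k))
    (hOK : ∀ i j, g i j = 0 ∨ 0 ≤ (g i j).order)
    (hbelow : ∀ i j : Fin (2*n), j < i → (g i j = 0 ∨ 1 ≤ (g i j).order))
    (hdet_ne : g.det ≠ 0) (hdet_unit : (g.det).order = 0)
    (c : LaurentSeries k) (hc : c ≠ 0)
    (hsim : gᵀ * Jmat k n * g = c • Jmat k n) :
    c ^ n = g.det := by
  set φ : PowerSeries k →+* (LaurentSeries k) := HahnSeries.ofPowerSeries ℤ k with hφ
  have φinj : Function.Injective φ := HahnSeries.ofPowerSeries_injective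
  rw [Jmat_eq_Jgen] at hsim
  -- determinant relation
  have hJdet : (Jgen (LaurentSeries k) n).det ≠ 0 := by
    intro h0
    have := Jgen_det_sq (LaurentSeries k) n
    rw [h0, mul_zero] at this
    exact zero_ne_one this
  have hdetsq : g.det ^ 2 = c ^ (2*n) := by
    have hd := congrArg Matrix.det hsim
    rw [Matrix.det_mul, Matrix.det_mul, Matrix.det_transpose, Matrix.det_smul,
      Fintype.card_fin] at hd
    apply mul_right_cancel₀ hJdet
    calc g.det ^ 2 * (Jgen (LaurentSeries k) n).det = g.det * (Jgen (LaurentSeries k) n).det * g.det := by ring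
    _ = c ^ (2*n) * (Jgen (LaurentSeries k) n).det := hd
  -- order of c is 0
  have hcord : c.order = 0 := by
    have h1 := congrArg HahnSeries.order hdetsq
    rw [HahnSeries.order_pow, HahnSeries.order_pow, hdet_unit, smul_zero] at h1
    have h2 : ((2*n : ℕ) : ℤ) * c.order = 0 := by
      rw [← nsmul_eq_mul]; exact h1.symm
    rcases mul_eq_zero.mp h2 with h3 | h3
    · exfalso; have : (2*n : ℕ) = 0 := by exact_mod_cast h3
      omega
    · exact h3
  -- lift g and c to power series
  choose G hG using fun i j => exists_lift (g i j) (hOK i j)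
  have hGg : (Matrix.of G).map φ = g := Matrix.ext fun i j => hG i j
  obtain ⟨C, hC⟩ := exists_lift c (Or.inr (le_of_eq hcord.symm))
  set G' : Matrix (Fin (2*n)) (Fin (2*n)) (PowerSeries k) := Matrix.of G with hG'
  -- the similitude relation over power series
  have hsim' : G'ᵀ * Jgen (PowerSeries k) n * G' = C • Jgen (PowerSeries k) n := by
    have hmap : (G'ᵀ * Jgen (PowerSeries k) n * G').map φ
        = (C • Jgen (PowerSeries k) n).map φ := by
      rw [Matrix.map_mul, Matrix.map_mul, Matrix.transpose_map, map_Jgen, hGg]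
      refine hsim.trans (Matrix.ext fun a b => ?_)
      simp only [Matrix.map_apply, Matrix.smul_apply, smul_eq_mul, _root_.map_mul, hC]
      congr 1
      · exact hC.symm
      simp [Jgen, apply_ite φ]
    refine Matrix.ext fun i j => φinj ?_
    exact congrFun (congrFun hmap i) j
  -- reduce mod t
  set ψ : PowerSeries k →+* k := PowerSeries.constantCoeff (R := k) with hψ
  set M : Matrix (Fin (2*n)) (Fin (2*n)) k := G'.map ψ with hM
  set cbar : k := ψ C with hcbar
  have hsimbar : Mᵀ * Jgen k n * M = cbar • Jgen k n := by
    have := congrArg (Matrix.map · ψ) hsim'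
    rw [Matrix.map_mul, Matrix.map_mul, Matrix.transpose_map, map_Jgen] at this
    rw [← hM] at this
    rw [this]
    refine Matrix.ext fun a b => ?_
    simp only [Matrix.map_apply, Matrix.smul_apply, smul_eq_mul, _root_.map_mul, hcbar]
    congr 1
    simp [Jgen, apply_ite ψ]
  -- coefficient facts
  have hcoeff : ∀ i j, ψ (G' i j) = (g i j).coeff 0 := by
    intro i j
    rw [← hG i j]
    have := HahnSeries.ofPowerSeries_apply_coeff (Γ := ℤ) (G' i j) 0
    simpa [hφ, hψ, hG'] using this.symm
  have htri : ∀ i j : Fin (2*n), j < i → M i j = 0 := by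
    intro i j hij
    rw [hM, Matrix.map_apply, hcoeff]
    rcases hbelow i j hij with h0 | h1
    · rw [h0]; simp
    · exact HahnSeries.coeff_eq_zero_of_lt_order (lt_of_lt_of_le zero_lt_one h1)
  have hcbar_ne : cbar ≠ 0 := by
    have : cbar = c.coeff 0 := by
      rw [hcbar, ← hC]
      have := HahnSeries.ofPowerSeries_apply_coeff (Γ := ℤ) C 0
      simpa [hφ, hψ] using this.symm
    rw [this, ← hcord]
    exact fun h0 => hc (HahnSeries.coeff_order_eq_zero.mp h0)
  -- det of the reduction
  have hdetM : M.det = cbar ^ n := by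
    have hblock : M.BlockTriangular id := fun i j hij => htri i j hij
    rw [Matrix.det_of_upperTriangular hblock]
    exact prod_pair (fun i => M i i) cbar (fun i => diag_pair M htri cbar hsimbar i) 
  have hdetMψ : M.det = ψ G'.det := by
    rw [hM, RingHom.map_det, RingHom.mapMatrix_apply]
  have hdetgφ : g.det = φ G'.det := by
    rw [← hGg, RingHom.map_det, RingHom.mapMatrix_apply]
  -- the sign dichotomy
  have hfactor : (g.det - c ^ n) * (g.det + c ^ n) = 0 := by
    have h2 : c ^ (2*n) = (c ^ n) ^ 2 := by rw [← pow_mul]; ring_nf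
    rw [h2] at hdetsq
    linear_combination hdetsq
  rcases mul_eq_zero.mp hfactor with h | h
  · have := sub_eq_zero.mp h
    rw [this]
  · exfalso
    have hneg : g.det = -c ^ n := by
      have := eq_neg_of_add_eq_zero_left h
      rw [this]
    have hG'neg : G'.det = -(C ^ n) := by
      apply φinj
      rw [map_neg, map_pow, hC, ← hdetgφ, hneg]
    have : M.det = -(cbar ^ n) := by
      rw [hdetMψ, hG'neg, map_neg, map_pow]
    rw [hdetM] at this
    have h2c : (2 : k) * cbar ^ n = 0 := by linear_combination this
    rcases mul_eq_zero.mp h2c with h3 | h3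
    · exact hk2 h3
    · exact pow_ne_zero n hcbar_ne h3

end OrthLM
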